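/- Let Z ~ Gamma(α) with 0 < α ≤ γ. Then the function φ(y) = P(Z^γ ≤ y) is concave on (0, ∞). -/

import Mathlib

open MeasureTheory ProbabilityTheory Real Finset

noncomputable section

variable {Ω : Type*} [MeasurableSpace Ω]

/-- `X ~ Pareto(α)` : cdf `1 - x^(-α)` for `x ≥ 1`. -/
def IsPareto (P : Measure Ω) (α : ℝ) (X : Ω → ℝ) : Prop :=
  Measurable X ∧ (∀ x : ℝ, 1 ≤ x → P {ω | x < X ω} = ENNReal.ofReal (x ^ (-α))) ∧
    P {ω | X ω < 1} = 0

/-- the increasing rearrangement of a vector -/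
def sortedVec {n : ℕ} (f : Fin n → ℝ) : Fin n → ℝ := f ∘ Tuple.sort f

/-- `MajorizedBy θ η` : `θ ⪯ η`, i.e. equal sums and the sum of the `k` smallest
components of `θ` is at least that of `η` for each `k`. -/
def MajorizedBy {n : ℕ} (θ η : Fin n → ℝ) : Prop :=
  (∑ i, θ i = ∑ i, η i) ∧
  ∀ k : ℕ, k ≤ n →
    ∑ i ∈ Finset.univ.filter (fun i : Fin n => (i : ℕ) < k), sortedVec η i ≤
    ∑ i ∈ Finset.univ.filter (fun i : Fin n => (i : ℕ) < k), sortedVec θ i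
theorem stmt_19 (P : Measure Ω) [IsProbabilityMeasure P]
    (α γ : ℝ) (hα : 0 < α) (hαγ : α ≤ γ)
    (Z : Ω → ℝ) (hZm : Measurable Z) (hZ : Measure.map Z P = gammaMeasure α 1) :
    ConcaveOn ℝ (Set.Ioi 0) (fun y : ℝ => (P {ω | Z ω ^ γ ≤ y}).toReal) := by
  have hγ : (0:ℝ) < γ := hα.trans_le hαγ
  set μ := gammaMeasure α 1 with hμ
  have hprob : IsProbabilityMeasure μ := isProbabilityMeasure_gammaMeasure hα one_pos
  have hΓ : 0 < Real.Gamma α := Real.Gamma_pos_of_pos hα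
  have hpdf_nonneg := gammaPDFReal_nonneg hα one_pos
  have hpdf_meas := measurable_gammaPDFReal α 1
  -- the pdf is integrable
  have hint : Integrable (gammaPDFReal α 1) := by
    have h1 : Integrable (fun x => (gammaPDF α 1 x).toReal) :=
      integrable_toReal_of_lintegral_ne_top
        (hpdf_meas.ennreal_ofReal.aemeasurable)
        (by rw [lintegral_gammaPDF_eq_one hα one_pos]; exact ENNReal.one_ne_top)
    exact h1.congr (ae_of_all _ fun x => ENNReal.toReal_ofReal (hpdf_nonneg x))
  -- μ vanishes on the negative reals
  have h0 : μ (Set.Iio 0) = 0 := by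
    rw [hμ, gammaMeasure, withDensity_apply _ measurableSet_Iio,
      setLIntegral_congr_fun measurableSet_Iio
        (fun x (hx : x < 0) => gammaPDF_of_neg hx), lintegral_zero]
  have hm : ∀ s : Set ℝ, μ s = μ (s ∩ Set.Ici 0) := by
    intro s
    calc μ s = μ (s ∩ Set.Ici 0) + μ (s \ Set.Ici 0) :=
          (measure_inter_add_diff s measurableSet_Ici).symm
      _ = μ (s ∩ Set.Ici 0) := by
          rw [measure_mono_null (fun x hx => Set.mem_Iio.mpr (not_le.mp hx.2) : s \ Set.Ici 0 ⊆ Set.Iio 0) h0,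
            add_zero]
  -- continuity of the pdf at positive points
  have hcont : ∀ t : ℝ, 0 < t → ContinuousAt (gammaPDFReal α 1) t := by
    intro t ht
    have heq : (fun x => (1:ℝ) ^ α / Real.Gamma α * x ^ (α - 1) * Real.exp (-(1 * x)))
        =ᶠ[nhds t] gammaPDFReal α 1 := by
      filter_upwards [Ioi_mem_nhds ht] with x hx
      simp [gammaPDFReal, le_of_lt (Set.mem_Ioi.mp hx)]
    refine ContinuousAt.congr ?_ heq
    exact (continuousAt_const.mul
        (Real.continuousAt_rpow_const t (α - 1) (Or.inl ht.ne'))).mul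
      ((Real.continuous_exp.comp ((continuous_const.mul continuous_id).neg)).continuousAt)
  -- the auxiliary function
  set c : ℝ := (μ (Set.Iic 0)).toReal with hc
  set G : ℝ → ℝ := fun y => c + ∫ u in (0:ℝ)..(y ^ γ⁻¹), gammaPDFReal α 1 u with hGdef
  -- the key identity on (0, ∞)
  have key : ∀ y ∈ Set.Ioi (0:ℝ), G y = (P {ω | Z ω ^ γ ≤ y}).toReal := by
    intro y hy
    have hy : (0:ℝ) < y := hy
    set t : ℝ := y ^ γ⁻¹ with ht'
    have ht : 0 < t := Real.rpow_pos_of_pos hy _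
    have hSm : MeasurableSet {x : ℝ | x ^ γ ≤ y} :=
      measurableSet_le (measurable_id.pow_const γ) measurable_const
    have hmap : P {ω | Z ω ^ γ ≤ y} = μ {x : ℝ | x ^ γ ≤ y} := by
      rw [show {ω | Z ω ^ γ ≤ y} = Z ⁻¹' {x : ℝ | x ^ γ ≤ y} from rfl,
        ← Measure.map_apply hZm hSm, hZ]
    have hset : {x : ℝ | x ^ γ ≤ y} ∩ Set.Ici 0 = Set.Iic t ∩ Set.Ici 0 := by
      ext x
      simp only [Set.mem_inter_iff, Set.mem_setOf_eq, Set.mem_Iic, Set.mem_Ici]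
      refine and_congr_left fun hx => ⟨fun h => ?_, fun h => ?_⟩
      · have := Real.rpow_le_rpow (Real.rpow_nonneg hx γ) h (inv_nonneg.mpr hγ.le)
        rwa [Real.rpow_rpow_inv hx hγ.ne'] at this
      · have := Real.rpow_le_rpow hx h hγ.le
        rwa [Real.rpow_inv_rpow hy.le hγ.ne'] at this
    have hmeq : μ {x : ℝ | x ^ γ ≤ y} = μ (Set.Iic t) := by
      rw [hm {x : ℝ | x ^ γ ≤ y}, hset, ← hm]
    have hsplit : μ (Set.Iic t) = μ (Set.Iic 0) + μ (Set.Ioc 0 t) := by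
      rw [← Set.Iic_union_Ioc_eq_Iic ht.le,
        measure_union (Set.Iic_disjoint_Ioc le_rfl) measurableSet_Ioc]
    have hIoc : (μ (Set.Ioc 0 t)).toReal = ∫ u in Set.Ioc (0:ℝ) t, gammaPDFReal α 1 u := by
      rw [hμ, gammaMeasure, withDensity_apply _ measurableSet_Ioc]
      exact (integral_eq_lintegral_of_nonneg_ae
        (ae_of_all _ fun x => hpdf_nonneg x)
        hpdf_meas.aestronglyMeasurable.restrict).symm
    rw [hmap, hmeq, hsplit, ENNReal.toReal_add (measure_ne_top μ _) (measure_ne_top μ _),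
      hGdef]
    simp only
    rw [intervalIntegral.integral_of_le ht.le, hIoc, hc]
  -- derivative of G
  set D : ℝ → ℝ := fun y => gammaPDFReal α 1 (y ^ γ⁻¹) * (γ⁻¹ * y ^ (γ⁻¹ - 1)) with hD
  have hderiv : ∀ y : ℝ, 0 < y → HasDerivAt G (D y) y := by
    intro y hy
    have ht : 0 < y ^ γ⁻¹ := Real.rpow_pos_of_pos hy _
    have h1 : HasDerivAt (fun u => ∫ x in (0:ℝ)..u, gammaPDFReal α 1 x)
        (gammaPDFReal α 1 (y ^ γ⁻¹)) (y ^ γ⁻¹) :=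
      intervalIntegral.integral_hasDerivAt_right hint.intervalIntegrable
        (hpdf_meas.stronglyMeasurable.stronglyMeasurableAtFilter)
        (hcont _ ht)
    have h2 : HasDerivAt (fun y : ℝ => y ^ γ⁻¹) (γ⁻¹ * y ^ (γ⁻¹ - 1)) y :=
      Real.hasDerivAt_rpow_const (Or.inl hy.ne')
    exact (h1.comp y h2).const_add c
  -- D is antitone on (0, ∞)
  have hβ : γ⁻¹ * (α - 1) + (γ⁻¹ - 1) ≤ 0 := by
    have h1 : α * γ⁻¹ ≤ γ * γ⁻¹ := mul_le_mul_of_nonneg_right hαγ (inv_nonneg.mpr hγ.le)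
    rw [mul_inv_cancel₀ hγ.ne'] at h1
    nlinarith
  have hDval : ∀ z : ℝ, 0 < z → D z = (Real.Gamma α)⁻¹ * γ⁻¹ *
      (z ^ (γ⁻¹ * (α - 1) + (γ⁻¹ - 1)) * Real.exp (-(z ^ γ⁻¹))) := by
    intro z hz
    have hzt : (0:ℝ) ≤ z ^ γ⁻¹ := (Real.rpow_pos_of_pos hz _).le
    rw [hD]
    simp only [gammaPDFReal, if_pos hzt, Real.one_rpow, one_mul, one_div]
    rw [← Real.rpow_mul hz.le, Real.rpow_add hz]
    ring
  have hanti : AntitoneOn D (Set.Ioi 0) := by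
    intro x hx y hy hxy
    have hx : (0:ℝ) < x := hx
    have hy : (0:ℝ) < y := hy
    rw [hDval x hx, hDval y hy]
    apply mul_le_mul_of_nonneg_left _ (by positivity)
    apply mul_le_mul (Real.rpow_le_rpow_of_nonpos hx hxy hβ)
      (Real.exp_le_exp.mpr (neg_le_neg
        (Real.rpow_le_rpow hx.le hxy (inv_nonneg.mpr hγ.le))))
      (Real.exp_pos _).le (Real.rpow_nonneg hx.le _)
  have hG : ConcaveOn ℝ (Set.Ioi 0) G := by
    refine AntitoneOn.concaveOn_of_deriv (convex_Ioi 0)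
      (fun y hy => ((hderiv y hy).differentiableAt.continuousAt).continuousWithinAt) ?_ ?_
    · rw [interior_Ioi]
      exact fun y hy => (hderiv y hy).differentiableAt.differentiableWithinAt
    · rw [interior_Ioi]
      intro x hx y hy hxy
      rw [(hderiv x hx).deriv, (hderiv y hy).deriv]
      exact hanti hx hy hxy
  exact hG.congr key
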